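/- arXiv:0811.0308 — 3 statements merged into one kernel-verified Lean document; each statement's English description precedes it below -/
import Mathlib

section
/- Let $\mathcal{N}$ be a locally finite set of points in $\mathbb{R}^d$ and let $u,v$ be two distinct points of $\mathcal{N}$. Define: $w$ is a Delaunay neighbour of $v$ if there exists a closed Euclidean ball whose boundary contains both $v$ and $w$ and whose interior contains no point of $\mathcal{N}$. Then there exists a point $w\in\mathcal{N}\setminus\{v\}$ which is a Delaunay neighbour of $v$ and which lies in the closed ball with diameter segment $[u,v]$. -/
open Metric RealInnerProductSpace

/-- For a locally finite set `N ⊆ ℝ^d` and distinct `u v ∈ N`, there is a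
Delaunay neighbour `w` of `v` lying in the closed ball with diameter `[u,v]`. -/
theorem stmt1 {d : ℕ} (N : Set (EuclideanSpace ℝ (Fin d)))
    (hloc : ∀ (x : EuclideanSpace ℝ (Fin d)) (r : ℝ),
      (N ∩ Metric.closedBall x r).Finite)
    (u v : EuclideanSpace ℝ (Fin d)) (hu : u ∈ N) (hv : v ∈ N) (huv : u ≠ v) :
    ∃ w ∈ N, w ≠ v ∧
      (∃ (c : EuclideanSpace ℝ (Fin d)) (r : ℝ),
        dist v c = r ∧ dist w c = r ∧ ∀ p ∈ N, p ∉ Metric.ball c r) ∧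
      w ∈ Metric.closedBall (midpoint ℝ u v) (dist u v / 2) := by
  classical
  set m : EuclideanSpace ℝ (Fin d) := midpoint ℝ u v with hm
  set R : ℝ := dist u v / 2 with hRdef
  have hdpos : 0 < dist u v := dist_pos.mpr huv
  have hR : 0 < R := by rw [hRdef]; linarith
  have hmvR : ‖m - v‖ = R := by
    rw [← dist_eq_norm, hm, dist_midpoint_right, hRdef]
    simp [Real.norm_eq_abs]
    ring
  -- key quantities
  set a : EuclideanSpace ℝ (Fin d) → ℝ := fun w => ‖w - v‖ ^ 2 with ha
  set b : EuclideanSpace ℝ (Fin d) → ℝ := fun w => 2 * (inner ℝ (w - v) (m - v) : ℝ) with hb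
  have hexp : ∀ (w : EuclideanSpace ℝ (Fin d)) (t : ℝ),
      ‖(w - v) - t • (m - v)‖ ^ 2 = a w - t * b w + t ^ 2 * R ^ 2 := by
    intro w t
    rw [norm_sub_sq_real, real_inner_smul_right, norm_smul]
    simp only [ha, hb, hmvR, Real.norm_eq_abs]
    rw [mul_pow, sq_abs]
    ring
  have hkey : ∀ w ∈ closedBall m R, a w ≤ b w := by
    intro w hw
    have h1 : ‖w - m‖ ≤ R := by rw [← dist_eq_norm]; exact mem_closedBall.mp hw
    have h2 : ‖(w - v) - (1 : ℝ) • (m - v)‖ ^ 2 = a w - 1 * b w + 1 ^ 2 * R ^ 2 :=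
      hexp w 1
    have h3 : (w - v) - (1 : ℝ) • (m - v) = w - m := by
      rw [one_smul]; abel
    rw [h3] at h2
    nlinarith [norm_nonneg (w - m)]
  -- the finite nonempty set S
  set S : Set (EuclideanSpace ℝ (Fin d)) := (N ∩ closedBall m R) \ {v} with hS
  have hSfin : S.Finite := (hloc m R).subset (fun x hx => hx.1)
  have huS : u ∈ S := by
    refine ⟨⟨hu, ?_⟩, huv⟩
    rw [mem_closedBall, hm, dist_comm, dist_midpoint_left, hRdef]
    simp [Real.norm_eq_abs]
    linarith
  set τ : EuclideanSpace ℝ (Fin d) → ℝ := fun w => a w / b w with hτ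
  obtain ⟨w, hwS, hwmin⟩ := Set.exists_min_image S τ hSfin ⟨u, huS⟩
  obtain ⟨⟨hwN, hwball⟩, hwv⟩ := hwS
  have hwv' : w ≠ v := hwv
  have hapos : 0 < a w := by
    have h0 : w - v ≠ 0 := sub_ne_zero.mpr hwv'
    have : 0 < ‖w - v‖ := norm_pos_iff.mpr h0
    simp only [ha]
    positivity
  have hab : a w ≤ b w := hkey w hwball
  have hbpos : 0 < b w := lt_of_lt_of_le hapos hab
  set t : ℝ := τ w with ht
  have htpos : 0 < t := div_pos hapos hbpos
  have htle : t ≤ 1 := by rw [ht, hτ]; exact div_le_one_of_le₀ hab hbpos.le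
  have htb : t * b w = a w := by
    rw [ht, hτ]; field_simp
  set c : EuclideanSpace ℝ (Fin d) := v + t • (m - v) with hc
  set r : ℝ := t * R with hr
  have hrpos : 0 < r := mul_pos htpos hR
  have hvc : dist v c = r := by
    rw [hc, dist_self_add_right, norm_smul, hmvR, Real.norm_eq_abs,
      abs_of_pos htpos]
  have hwc2 : ∀ p : EuclideanSpace ℝ (Fin d),
      dist p c ^ 2 = a p - t * b p + r ^ 2 := by
    intro p
    have : p - c = (p - v) - t • (m - v) := by rw [hc]; abel
    rw [dist_eq_norm, this, hexp, hr, mul_pow]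
  have hwc : dist w c = r := by
    have h2 : dist w c ^ 2 = r ^ 2 := by rw [hwc2 w, htb]; ring
    nlinarith [dist_nonneg (x := w) (y := c)]
  have hcm : dist c m = (1 - t) * R := by
    have : c - m = (t - 1) • (m - v) := by
      rw [hc]; rw [sub_smul, one_smul]; abel
    rw [dist_eq_norm, this, norm_smul, hmvR, Real.norm_eq_abs,
      abs_of_nonpos (by linarith)]
    ring
  refine ⟨w, hwN, hwv', ⟨c, r, hvc, hwc, ?_⟩, hwball⟩
  intro p hpN hpball
  have hpc : dist p c < r := mem_ball.mp hpball
  have hpm : p ∈ closedBall m R := by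
    rw [mem_closedBall]
    refine le_of_lt ?_
    calc dist p m ≤ dist p c + dist c m := dist_triangle p c m
    _ < r + (1 - t) * R := by rw [hcm]; linarith
    _ = R := by rw [hr]; ring
  have hpv : p ≠ v := by
    intro h; rw [h, hvc] at hpc; exact lt_irrefl r hpc
  have hpS : p ∈ S := ⟨⟨hpN, hpm⟩, hpv⟩
  have hpa : a p < t * b p := by
    have := hwc2 p
    nlinarith [dist_nonneg (x := p) (y := c), hpc, hrpos]
  have hbp : 0 < b p := by
    have hap : 0 < a p := by
      have h0 : p - v ≠ 0 := sub_ne_zero.mpr hpv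
      have : 0 < ‖p - v‖ := norm_pos_iff.mpr h0
      simp only [ha]
      positivity
    nlinarith
  have : τ p < t := by
    rw [hτ]; rw [div_lt_iff₀ hbp]; linarith
  exact absurd (hwmin p hpS) (not_le.mpr this)
end

section
/- Let $\mathcal{N}$ be a locally finite set of points in $\mathbb{R}^d$ and let $u,v\in\mathcal{N}$ be distinct. Then there exists a finite path $v=w_0,w_1,\ldots,w_k=u$ in the Delaunay graph of $\mathcal{N}$ (each consecutive pair being Delaunay neighbours) such that every $w_i$ lies in the closed ball of center $u$ and radius $|u-v|$. -/
open RealInnerProductSpace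

set_option maxHeartbeats 1000000

private lemma sq_eq_of_nonneg {a b : ℝ} (ha : 0 ≤ a) (hb : 0 ≤ b) (h : a^2 = b^2) : a = b := by
  nlinarith

private lemma edge_step {d : ℕ} (N : Set (EuclideanSpace ℝ (Fin d)))
    (hloc : ∀ (x : EuclideanSpace ℝ (Fin d)) (r : ℝ),
      (N ∩ Metric.closedBall x r).Finite)
    (u v : EuclideanSpace ℝ (Fin d)) (hu : u ∈ N) (huv : u ≠ v) :
    ∃ p ∈ N, p ≠ v ∧ p ∈ Metric.closedBall u (dist u v) ∧
      (p = u ∨ dist u p < dist u v) ∧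
      ∃ (c : EuclideanSpace ℝ (Fin d)) (r' : ℝ),
        dist v c = r' ∧ dist p c = r' ∧ ∀ q ∈ N, q ∉ Metric.ball c r' := by
  obtain ⟨e, he_def⟩ : ∃ e, e = (2⁻¹ : ℝ) • (u - v) := ⟨_, rfl⟩
  obtain ⟨m, hm_def⟩ : ∃ m, m = v + e := ⟨_, rfl⟩
  obtain ⟨r, hr_def⟩ : ∃ r : ℝ, r = dist u v / 2 := ⟨_, rfl⟩
  have hduv : 0 < dist u v := dist_pos.mpr huv
  have hr : 0 < r := by rw [hr_def]; linarith
  have he : ‖e‖ = r := by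
    rw [he_def, norm_smul, hr_def, dist_eq_norm]
    simp [abs_of_nonneg]
    ring
  have hum : u - m = e := by rw [hm_def, he_def]; module
  -- key half-space fact
  have hkey : ∀ q : EuclideanSpace ℝ (Fin d), q ∈ Metric.closedBall m r →
      ‖q - v‖^2 ≤ 2 * ⟪q - v, e⟫ := by
    intro q hq
    have h1 : ‖q - m‖ ≤ r := by rwa [← dist_eq_norm, ← Metric.mem_closedBall]
    have h2 : q - m = (q - v) - e := by rw [hm_def]; module
    have h3 : ‖(q - v) - e‖^2 = ‖q - v‖^2 - 2 * ⟪q - v, e⟫ + ‖e‖^2 :=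
      norm_sub_sq_real _ _
    rw [h2] at h1
    nlinarith [norm_nonneg ((q - v) - e)]
  -- the finite nonempty candidate set
  obtain ⟨S, hS_def⟩ : ∃ S : Set (EuclideanSpace ℝ (Fin d)),
      S = (N ∩ Metric.closedBall m r) \ {v} := ⟨_, rfl⟩
  have hSfin : S.Finite := by rw [hS_def]; exact (hloc m r).subset Set.diff_subset
  have huS : u ∈ S := by
    rw [hS_def]
    refine ⟨⟨hu, ?_⟩, by simp [huv]⟩
    rw [Metric.mem_closedBall, dist_eq_norm, hum, he]
  obtain ⟨t, ht_def⟩ : ∃ t : EuclideanSpace ℝ (Fin d) → ℝ,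
      t = fun q => ‖q - v‖^2 / (2 * ⟪q - v, e⟫) := ⟨_, rfl⟩
  obtain ⟨p, hpS, hpmin⟩ := Set.exists_min_image S t hSfin ⟨u, huS⟩
  rw [hS_def] at hpS
  obtain ⟨⟨hpN, hpball⟩, hpv'⟩ := hpS
  have hpv : p ≠ v := by simpa using hpv'
  have hpvn : (0:ℝ) < ‖p - v‖^2 :=
    pow_pos (norm_pos_iff.mpr (sub_ne_zero.mpr hpv)) 2
  have hDp : 0 < 2 * ⟪p - v, e⟫ := lt_of_lt_of_le hpvn (hkey p hpball)
  obtain ⟨T, hT_def⟩ : ∃ T : ℝ, T = t p := ⟨_, rfl⟩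
  have hT0 : 0 < T := by
    rw [hT_def, ht_def]
    exact div_pos hpvn hDp
  have hT1 : T ≤ 1 := by
    rw [hT_def, ht_def]
    exact (div_le_one hDp).mpr (hkey p hpball)
  have hTmul : ‖p - v‖^2 = T * (2 * ⟪p - v, e⟫) := by
    rw [hT_def, ht_def]
    exact (div_mul_cancel₀ _ (ne_of_gt hDp)).symm
  obtain ⟨c, hc_def⟩ : ∃ c, c = v + T • e := ⟨_, rfl⟩
  have hvc : dist v c = T * r := by
    rw [hc_def, dist_self_add_right, norm_smul, he, Real.norm_eq_abs,
      abs_of_pos hT0]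
  have hpc : dist p c = T * r := by
    have h2 : p - c = (p - v) - T • e := by rw [hc_def]; module
    have h3 : ‖p - c‖^2 = ‖p - v‖^2 - 2 * (T * ⟪p - v, e⟫) + T^2 * r^2 := by
      rw [h2, norm_sub_sq_real, real_inner_smul_right, norm_smul,
        Real.norm_eq_abs, abs_of_pos hT0, he]
      ring
    have h4 : ‖p - c‖^2 = (T * r)^2 := by rw [h3]; nlinarith [hTmul]
    rw [dist_eq_norm]
    exact sq_eq_of_nonneg (norm_nonneg _) (by positivity) h4
  have hcm : dist c m = (1 - T) * r := by
    have h2 : c - m = (T - 1) • e := by rw [hc_def, hm_def]; module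
    rw [dist_eq_norm, h2, norm_smul, Real.norm_eq_abs, he,
      abs_of_nonpos (by linarith)]
    ring
  -- emptiness of the witness ball
  have hempty : ∀ q ∈ N, q ∉ Metric.ball c (T * r) := by
    intro q hqN hqb
    rw [Metric.mem_ball] at hqb
    have hqv : q ≠ v := by
      intro h; rw [h, hvc] at hqb; exact lt_irrefl _ hqb
    have hqm : q ∈ Metric.closedBall m r := by
      rw [Metric.mem_closedBall]
      have := dist_triangle q c m
      rw [hcm] at this
      nlinarith
    have hqS : q ∈ S := by rw [hS_def]; exact ⟨⟨hqN, hqm⟩, by simp [hqv]⟩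
    have hDq : 0 < 2 * ⟪q - v, e⟫ :=
      lt_of_lt_of_le (pow_pos (norm_pos_iff.mpr (sub_ne_zero.mpr hqv)) 2)
        (hkey q hqm)
    have hsq : ‖q - c‖^2 < (T * r)^2 := by
      rw [dist_eq_norm] at hqb
      nlinarith [norm_nonneg (q - c)]
    have h2 : q - c = (q - v) - T • e := by rw [hc_def]; module
    have h3 : ‖q - c‖^2 = ‖q - v‖^2 - 2 * (T * ⟪q - v, e⟫) + T^2 * r^2 := by
      rw [h2, norm_sub_sq_real, real_inner_smul_right, norm_smul,
        Real.norm_eq_abs, abs_of_pos hT0, he]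
      ring
    have htq : t q < T := by
      rw [ht_def]
      rw [div_lt_iff₀ hDq]
      nlinarith
    rw [← hT_def] at hpmin
    exact absurd (hpmin q hqS) (by linarith)
  have hmu : dist m u = r := by
    rw [dist_eq_norm, ← norm_neg, neg_sub, hum, he]
  have hpu : dist p u ≤ dist u v := by
    have h1 := dist_triangle p m u
    have h2 : dist p m ≤ r := by rwa [Metric.mem_closedBall] at hpball
    rw [hmu] at h1
    rw [hr_def] at h2
    rw [hr_def] at h1
    linarith
  refine ⟨p, hpN, hpv, by rwa [Metric.mem_closedBall], ?_, c, T * r, hvc, hpc, hempty⟩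
  -- strictness or p = u
  by_cases hpu' : p = u
  · exact Or.inl hpu'
  right
  rcases lt_or_eq_of_le hpu with h | h
  · rwa [dist_comm]
  exfalso
  -- equality case: p must equal v, contradicting p ≠ v
  have ha : ‖p - m‖ ≤ r := by
    rwa [← dist_eq_norm, ← Metric.mem_closedBall]
  have hb : ‖m - u‖ = r := by rw [← dist_eq_norm, hmu]
  have hab : ‖(p - m) + (m - u)‖ = 2 * r := by
    have hpmu : (p - m) + (m - u) = p - u := by module
    rw [hpmu, ← dist_eq_norm, h, hr_def]; ring
  have hsq : ‖(p - m) + (m - u)‖^2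
      = ‖p - m‖^2 + 2 * ⟪p - m, m - u⟫ + ‖m - u‖^2 := by
    rw [norm_add_sq_real]
  have hCS : ⟪p - m, m - u⟫ ≤ ‖p - m‖ * ‖m - u‖ := real_inner_le_norm _ _
  have hanorm : ‖p - m‖ = r := by nlinarith [norm_nonneg (p - m)]
  have hinner : ⟪p - m, m - u⟫ = ‖p - m‖ * ‖m - u‖ := by
    rw [hanorm, hb]; nlinarith
  have hsmul := inner_eq_norm_mul_iff_real.mp hinner
  rw [hanorm, hb] at hsmul
  have heq : p - m = m - u := smul_right_injective _ (ne_of_gt hr) hsmul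
  apply hpv
  have h2m : m + m = v + u := by rw [hm_def, he_def]; module
  have hp1 : p = m + (m - u) := by rw [← heq]; module
  rw [hp1]
  have hp2 : m + (m - u) = (m + m) - u := by module
  rw [hp2, h2m]
  module

/-- For a locally finite set `N ⊆ ℝ^d` and distinct `u v ∈ N`, there is a path
`v = w 0, …, w k = u` in the Delaunay graph of `N`, entirely contained in the
closed ball of center `u` and radius `|u - v|`. -/
theorem stmt2 {d : ℕ} (N : Set (EuclideanSpace ℝ (Fin d)))
    (hloc : ∀ (x : EuclideanSpace ℝ (Fin d)) (r : ℝ),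
      (N ∩ Metric.closedBall x r).Finite)
    (u v : EuclideanSpace ℝ (Fin d)) (hu : u ∈ N) (hv : v ∈ N) (huv : u ≠ v) :
    ∃ (k : ℕ) (w : Fin (k + 1) → EuclideanSpace ℝ (Fin d)),
      w 0 = v ∧ w (Fin.last k) = u ∧ (∀ i, w i ∈ N) ∧
      (∀ i j : Fin (k + 1), (i : ℕ) + 1 = (j : ℕ) →
        w i ≠ w j ∧
        ∃ (c : EuclideanSpace ℝ (Fin d)) (r : ℝ),
          dist (w i) c = r ∧ dist (w j) c = r ∧ ∀ p ∈ N, p ∉ Metric.ball c r) ∧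
      (∀ i, w i ∈ Metric.closedBall u (dist u v)) := by
  have main : ∀ n : ℕ, ∀ v : EuclideanSpace ℝ (Fin d), v ∈ N → u ≠ v →
      ((hloc u (dist u v)).toFinset.card ≤ n) →
      ∃ (k : ℕ) (w : Fin (k + 1) → EuclideanSpace ℝ (Fin d)),
        w 0 = v ∧ w (Fin.last k) = u ∧ (∀ i, w i ∈ N) ∧
        (∀ i j : Fin (k + 1), (i : ℕ) + 1 = (j : ℕ) →
          w i ≠ w j ∧
          ∃ (c : EuclideanSpace ℝ (Fin d)) (r : ℝ),
            dist (w i) c = r ∧ dist (w j) c = r ∧ ∀ p ∈ N, p ∉ Metric.ball c r) ∧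
        (∀ i, w i ∈ Metric.closedBall u (dist u v)) := by
    intro n
    induction n with
    | zero =>
      intro v hv huv hcard
      exfalso
      have hmem : u ∈ (hloc u (dist u v)).toFinset := by
        rw [Set.Finite.mem_toFinset]
        exact ⟨hu, by simp [dist_nonneg]⟩
      have := Finset.card_pos.mpr ⟨u, hmem⟩
      omega
    | succ n ih =>
      intro v hv huv hcard
      obtain ⟨p, hpN, hpv, hpball, hstrict, c, r', hvc, hpc, hempty⟩ :=
        edge_step N hloc u v hu huv
      by_cases hpu : p = u
      · -- direct edge v -- u
        subst hpu
        refine ⟨1, ![v, p], rfl, rfl, ?_, ?_, ?_⟩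
        · intro i; fin_cases i
          · exact hv
          · exact hpN
        · intro i j hij
          have hi2 := i.isLt
          have hj2 := j.isLt
          have hi : i = 0 := by ext; simp; omega
          have hj : j = 1 := by ext; simp; omega
          subst hi; subst hj
          refine ⟨Ne.symm hpv, c, r', ?_, ?_, hempty⟩
          · simpa using hvc
          · simpa using hpc
        · intro i; fin_cases i
          · simpa [dist_comm] using le_refl (dist u v)
          · simp [dist_nonneg]
      · have hlt : dist u p < dist u v := hstrict.resolve_left hpu
        have hup : u ≠ p := fun h => hpu h.symm
        have hsub1 : (hloc u (dist u p)).toFinset ⊆ (hloc u (dist u v)).toFinset := by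
          intro q hq
          rw [Set.Finite.mem_toFinset] at hq ⊢
          exact ⟨hq.1, Metric.closedBall_subset_closedBall hlt.le hq.2⟩
        have hvmem : v ∈ (hloc u (dist u v)).toFinset := by
          rw [Set.Finite.mem_toFinset]
          exact ⟨hv, by simp [dist_comm]⟩
        have hvnot : v ∉ (hloc u (dist u p)).toFinset := by
          rw [Set.Finite.mem_toFinset]
          rintro ⟨-, hq2⟩
          rw [Metric.mem_closedBall, dist_comm] at hq2
          linarith
        have hsub : (hloc u (dist u p)).toFinset ⊂ (hloc u (dist u v)).toFinset := by
          rw [Finset.ssubset_def]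
          exact ⟨hsub1, fun hcon => hvnot (hcon hvmem)⟩
        have hcard' : (hloc u (dist u p)).toFinset.card ≤ n := by
          have h2 := Finset.card_lt_card hsub
          omega
        obtain ⟨k, w, hw0, hwl, hwN, hwE, hwB⟩ := ih p hpN hup hcard'
        obtain ⟨w', hw'⟩ : ∃ w' : Fin (k + 2) → EuclideanSpace ℝ (Fin d),
            w' = fun i : Fin (k + 2) => if h : (i : ℕ) = 0 then v
              else w ⟨(i : ℕ) - 1, by have := i.isLt; omega⟩ := ⟨_, rfl⟩
        refine ⟨k + 1, w', ?_, ?_, ?_, ?_, ?_⟩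
        · simp [hw']
        · have hne : ((Fin.last (k + 1) : Fin (k + 2)) : ℕ) ≠ 0 := by simp
          rw [hw']
          simp only []
          rw [dif_neg hne]
          have hix : (⟨((Fin.last (k + 1) : Fin (k + 2)) : ℕ) - 1,
              by have := (Fin.last (k+1)).isLt; omega⟩ : Fin (k + 1)) = Fin.last k := by
            ext; simp
          rw [hix, hwl]
        · intro i
          rw [hw']
          by_cases h : (i : ℕ) = 0
          · simp only [dif_pos h]; exact hv
          · simp only [dif_neg h]; exact hwN _
        · intro i j hij
          rw [hw']
          by_cases h : (i : ℕ) = 0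
          · have hj : ¬ (j : ℕ) = 0 := by omega
            simp only [dif_pos h, dif_neg hj]
            have hjz : (⟨(j : ℕ) - 1, by have := j.isLt; omega⟩ : Fin (k + 1)) = 0 := by
              ext; simp; omega
            rw [hjz, hw0]
            exact ⟨Ne.symm hpv, c, r', hvc, hpc, hempty⟩
          · have hj : ¬ (j : ℕ) = 0 := by omega
            simp only [dif_neg h, dif_neg hj]
            exact hwE ⟨(i : ℕ) - 1, by have := i.isLt; omega⟩
              ⟨(j : ℕ) - 1, by have := j.isLt; omega⟩ (by simp; omega)
        · intro i
          rw [hw']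
          by_cases h : (i : ℕ) = 0
          · simp only [dif_pos h]
            simp [dist_comm]
          · simp only [dif_neg h]
            exact Metric.closedBall_subset_closedBall hlt.le (hwB _)
  exact main ((hloc u (dist u v)).toFinset.card) v hv huv le_rfl
end

section
/- Let $\mathbf{A}$ be a lattice animal of $\mathbb{G}_d$ (a finite connected set of vertices of $\mathbb{Z}^d$ with the $\ell^\infty$-adjacency, where $\mathbf{z}\sim\mathbf{z}'$ iff $|\mathbf{z}-\mathbf{z}'|_\infty=1$) containing the origin $\mathbf{0}$, with $|\mathbf{A}|=m$, and let $l\geq 1$ be an integer. Then there exists a sequence $\mathbf{x}_0=\mathbf{0},\mathbf{x}_1,\ldots,\mathbf{x}_h\in\mathbb{Z}^d$ with $h+1\leq 1+(2m-2)/l$ such that $\mathbf{A}\subseteq\bigcup_{i=0}^h\Lambda(l\mathbf{x}_i,2l)$ and $|\mathbf{x}_{i+1}-\mathbf{x}_i|_\infty\leq 1$ for $0\leq i\leq h-1$, where $\Lambda(\mathbf{x},l)=\{\mathbf{x}+\mathbf{k}:\mathbf{k}\in[-l,l]^d\cap\mathbb{Z}^d\}$. -/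
private lemma cggk_ediv_pair_abs (a b l : ℤ) (hl : 0 < l) (h : |a - b| ≤ l) :
    |a / l - b / l| ≤ 1 := by
  rw [abs_le] at h ⊢
  constructor
  · have h1 : b ≤ a + l := by linarith [h.1]
    have h2 := Int.ediv_le_ediv hl h1
    rw [show a + l = a + 1 * l by ring, Int.add_mul_ediv_right a 1 hl.ne'] at h2
    linarith
  · have h1 : a ≤ b + l := by linarith [h.2]
    have h2 := Int.ediv_le_ediv hl h1
    rw [show b + l = b + 1 * l by ring, Int.add_mul_ediv_right b 1 hl.ne'] at h2
    linarith

private lemma cggk_walk_dist {d : ℕ} (w : ℕ → Fin d → ℤ) (n : ℕ)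
    (hstep : ∀ t < n, ∀ s, |w (t + 1) s - w t s| ≤ 1) :
    ∀ u t, u ≤ t → t ≤ n → ∀ s, |w t s - w u s| ≤ (t : ℤ) - u := by
  intro u t
  induction t with
  | zero =>
    intro hut _ s
    interval_cases u
    simp
  | succ t ih =>
    intro hut htn s
    rcases Nat.lt_or_ge u (t + 1) with hu | hu
    · have hu' : u ≤ t := by omega
      have h1 := ih hu' (by omega) s
      have h2 := hstep t (by omega) s
      have h3 := abs_sub_le (w (t + 1) s) (w t s) (w u s)
      push_cast
      push_cast at h1
      linarith
    · have : u = t + 1 := by omega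
      subst this
      simp

private lemma cggk_grow {d : ℕ} (A : Finset (Fin d → ℤ)) (h0 : (0 : Fin d → ℤ) ∈ A)
    (hconn : ∀ z ∈ A, ∀ z' ∈ A, ∃ (k : ℕ) (w : Fin (k + 1) → (Fin d → ℤ)),
      w 0 = z ∧ w (Fin.last k) = z' ∧ (∀ i, w i ∈ A) ∧
      ∀ i j : Fin (k + 1), (i : ℕ) + 1 = (j : ℕ) →
        w i ≠ w j ∧ ∀ s : Fin d, |w i s - w j s| ≤ 1) :
    ∀ (c n : ℕ) (w : ℕ → Fin d → ℤ),
      w 0 = 0 →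
      (∀ t ≤ n, w t ∈ A) →
      (∀ t < n, ∀ s, |w (t + 1) s - w t s| ≤ 1) →
      (A \ (Finset.range (n + 1)).image w).card ≤ c →
      ∃ (n' : ℕ) (w' : ℕ → Fin d → ℤ), n' ≤ n + 2 * c ∧ w' 0 = 0 ∧
        (∀ t < n', ∀ s, |w' (t + 1) s - w' t s| ≤ 1) ∧
        ∀ z ∈ A, ∃ t ≤ n', w' t = z := by
  intro c
  induction c with
  | zero =>
    intro n w hw0 hwA hwstep hcard
    refine ⟨n, w, by omega, hw0, hwstep, ?_⟩
    intro z hz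
    have : z ∈ (Finset.range (n + 1)).image w := by
      by_contra hzn
      have : z ∈ A \ (Finset.range (n + 1)).image w := Finset.mem_sdiff.2 ⟨hz, hzn⟩
      have := Finset.card_pos.2 ⟨z, this⟩
      omega
    obtain ⟨t, ht, hwt⟩ := Finset.mem_image.1 this
    exact ⟨t, Nat.lt_succ_iff.1 (Finset.mem_range.1 ht), hwt⟩
  | succ c ih =>
    intro n w hw0 hwA hwstep hcard
    set S := (Finset.range (n + 1)).image w with hS
    rcases Finset.eq_empty_or_nonempty (A \ S) with hAS | ⟨z', hz'⟩
    · -- already covers A; reuse the c = 0 style conclusion via ih with card ≤ c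
      exact ih n w hw0 hwA hwstep (by rw [← hS, hAS]; simp) |>.imp
        fun n' ⟨w', h1, h2, h3, h4⟩ => ⟨w', by omega, h2, h3, h4⟩
    · have hz'A : z' ∈ A := (Finset.mem_sdiff.1 hz').1
      have hz'S : z' ∉ S := (Finset.mem_sdiff.1 hz').2
      obtain ⟨k, p, hp0, hpl, hpmem, hpstep⟩ := hconn 0 h0 z' hz'A
      classical
      have hex : ∃ j : ℕ, ∀ (hj : j < k + 1), p ⟨j, hj⟩ ∉ S := by
        refine ⟨k, fun hj => ?_⟩
        have : (⟨k, hj⟩ : Fin (k + 1)) = Fin.last k := rfl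
        rw [this, hpl]; exact hz'S
      set j0 := Nat.find hex with hj0def
      have hj0P : ∀ (hj : j0 < k + 1), p ⟨j0, hj⟩ ∉ S := Nat.find_spec hex
      have hj0k : j0 ≤ k := by
        refine Nat.find_min' hex (fun hj => ?_)
        have : (⟨k, hj⟩ : Fin (k + 1)) = Fin.last k := rfl
        rw [this, hpl]; exact hz'S
      have hj0lt : j0 < k + 1 := by omega
      have hj0 : p ⟨j0, hj0lt⟩ ∉ S := hj0P hj0lt
      have hj0pos : 0 < j0 := by
        rcases Nat.eq_zero_or_pos j0 with h | h
        · exfalso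
          have hP := hj0P (by omega)
          apply hP
          have : (⟨j0, by omega⟩ : Fin (k + 1)) = 0 := by ext; simp [h]
          rw [this, hp0]
          exact Finset.mem_image.2 ⟨0, Finset.mem_range.2 (by omega), hw0⟩
        · exact h
      have hprevlt : j0 - 1 < k + 1 := by omega
      have hprev : p ⟨j0 - 1, hprevlt⟩ ∈ S := by
        by_contra hc
        have hmin := Nat.find_min hex (show j0 - 1 < j0 by omega)
        push_neg at hmin
        obtain ⟨hj, hmem⟩ := hmin
        exact hc hmem
      have hstepj : ∀ s, |p ⟨j0 - 1, hprevlt⟩ s - p ⟨j0, hj0lt⟩ s| ≤ 1 :=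
        (hpstep ⟨j0 - 1, hprevlt⟩ ⟨j0, hj0lt⟩ (by simp; omega)).2
      have hzA : p ⟨j0, hj0lt⟩ ∈ A := hpmem _
      obtain ⟨τ, hτr, hτ⟩ := Finset.mem_image.1 hprev
      have hτn : τ ≤ n := Nat.lt_succ_iff.1 (Finset.mem_range.1 hτr)
      -- new walk with a detour at τ
      set z : Fin d → ℤ := p ⟨j0, hj0lt⟩ with hz
      set w' : ℕ → Fin d → ℤ :=
        fun t => if t ≤ τ then w t else if t = τ + 1 then z else w (t - 2) with hw'
      have hw'0 : w' 0 = 0 := by rw [hw']; simp [hw0]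
      have hw'le : ∀ t, t ≤ τ → w' t = w t := by
        intro t h; simp only [hw', if_pos h]
      have hw'mid : w' (τ + 1) = z := by
        simp only [hw']
        rw [if_neg (by omega)]
        simp
      have hw'gt : ∀ t, τ + 1 < t → w' t = w (t - 2) := by
        intro t h; simp only [hw']; rw [if_neg (by omega), if_neg (by omega)]
      have hw'A : ∀ t ≤ n + 2, w' t ∈ A := by
        intro t ht
        rcases Nat.lt_or_ge t (τ + 1) with h1 | h1
        · rw [hw'le t (by omega)]; exact hwA t (by omega)
        rcases Nat.eq_or_lt_of_le h1 with h2 | h2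
        · rw [← h2, hw'mid]; exact hzA
        · rw [hw'gt t h2]; exact hwA (t - 2) (by omega)
      have hw'step : ∀ t < n + 2, ∀ s, |w' (t + 1) s - w' t s| ≤ 1 := by
        intro t ht s
        rcases Nat.lt_or_ge t τ with h1 | h1
        · rw [hw'le (t + 1) (by omega), hw'le t (by omega)]
          exact hwstep t (by omega) s
        rcases Nat.eq_or_lt_of_le h1 with h2 | h2
        · rw [show t + 1 = τ + 1 by omega, hw'mid, hw'le t (by omega),
            show t = τ by omega, hτ]
          have := hstepj s
          rw [abs_sub_comm] at this
          exact this
        rcases Nat.eq_or_lt_of_le h2 with h3 | h3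
        · rw [show t = τ + 1 by omega, hw'mid, hw'gt (τ + 1 + 1) (by omega),
            show τ + 1 + 1 - 2 = τ by omega, hτ]
          exact hstepj s
        · rw [hw'gt (t + 1) (by omega), hw'gt t (by omega),
            show t + 1 - 2 = (t - 2) + 1 by omega]
          exact hwstep (t - 2) (by omega) s
      -- the old image together with z is contained in the new image
      have hsub : S ∪ {z} ⊆ (Finset.range (n + 3)).image w' := by
        intro y hy
        rcases Finset.mem_union.1 hy with hy | hy
        · obtain ⟨t, htr, hwt⟩ := Finset.mem_image.1 hy
          have htn : t ≤ n := Nat.lt_succ_iff.1 (Finset.mem_range.1 htr)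
          by_cases h1 : t ≤ τ
          · refine Finset.mem_image.2 ⟨t, Finset.mem_range.2 (by omega), ?_⟩
            rw [hw'le t h1]; exact hwt
          · refine Finset.mem_image.2 ⟨t + 2, Finset.mem_range.2 (by omega), ?_⟩
            rw [hw'gt (t + 2) (by omega), show t + 2 - 2 = t by omega]
            exact hwt
        · rw [Finset.mem_singleton.1 hy]
          exact Finset.mem_image.2 ⟨τ + 1, Finset.mem_range.2 (by omega), hw'mid⟩
      have hcard' : (A \ (Finset.range (n + 2 + 1)).image w').card ≤ c := by
        have h1 : A \ (Finset.range (n + 3)).image w' ⊆ (A \ S).erase z := by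
          intro y hy
          rcases Finset.mem_sdiff.1 hy with ⟨hyA, hyn⟩
          refine Finset.mem_erase.2 ⟨?_, Finset.mem_sdiff.2 ⟨hyA, ?_⟩⟩
          · intro hyz
            exact hyn (hsub (Finset.mem_union_right _ (by simp [hyz])))
          · intro hyS
            exact hyn (hsub (Finset.mem_union_left _ hyS))
        have h2 : z ∈ A \ S := Finset.mem_sdiff.2 ⟨hzA, hj0⟩
        calc (A \ (Finset.range (n + 2 + 1)).image w').card
            ≤ ((A \ S).erase z).card := Finset.card_le_card (by convert h1 using 3)
          _ = (A \ S).card - 1 := Finset.card_erase_of_mem h2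
          _ ≤ c := by omega
      obtain ⟨n', w'', h1, h2, h3, h4⟩ := ih (n + 2) w' hw'0 hw'A hw'step hcard'
      exact ⟨n', w'', by omega, h2, h3, h4⟩

/-- Lemma 1 of Cox–Gandolfi–Griffin–Kesten: a lattice animal `A` of `𝔾_d`
(`ℓ^∞`-adjacency on `ℤ^d`) containing `0` with `|A| = m` can be covered by
`h + 1 ≤ 1 + (2m-2)/l` boxes `Λ(l xᵢ, 2l)` with `|x_{i+1} - x_i|_∞ ≤ 1`. -/
theorem stmt10 (d : ℕ) (A : Finset (Fin d → ℤ)) (h0 : (0 : Fin d → ℤ) ∈ A)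
    (hconn : ∀ z ∈ A, ∀ z' ∈ A, ∃ (k : ℕ) (w : Fin (k + 1) → (Fin d → ℤ)),
      w 0 = z ∧ w (Fin.last k) = z' ∧ (∀ i, w i ∈ A) ∧
      ∀ i j : Fin (k + 1), (i : ℕ) + 1 = (j : ℕ) →
        w i ≠ w j ∧ ∀ s : Fin d, |w i s - w j s| ≤ 1)
    (m : ℕ) (hm : A.card = m) (l : ℕ) (hl : 1 ≤ l) :
    ∃ (h : ℕ) (x : Fin (h + 1) → (Fin d → ℤ)),
      x 0 = 0 ∧
      ((h : ℝ) + 1 ≤ 1 + (2 * (m : ℝ) - 2) / l) ∧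
      (∀ z ∈ A, ∃ i : Fin (h + 1), ∀ s : Fin d,
        |z s - (l : ℤ) * x i s| ≤ 2 * (l : ℤ)) ∧
      (∀ i j : Fin (h + 1), (i : ℕ) + 1 = (j : ℕ) →
        ∀ s : Fin d, |x i s - x j s| ≤ 1) := by
  classical
  have hm1 : 1 ≤ m := hm ▸ Finset.card_pos.2 ⟨0, h0⟩
  -- initial trivial walk
  have hinit : (A \ (Finset.range (0 + 1)).image (fun _ : ℕ => (0 : Fin d → ℤ))).card
      ≤ m - 1 := by
    have : (Finset.range (0 + 1)).image (fun _ : ℕ => (0 : Fin d → ℤ)) = {0} := by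
      simp
    rw [this]
    have : A \ {0} = A.erase 0 := by
      ext y; simp [Finset.mem_erase, Finset.mem_sdiff, and_comm]
    rw [this, Finset.card_erase_of_mem h0, hm]
  obtain ⟨n, w, hn, hw0, hwstep, hwcov⟩ :=
    cggk_grow A h0 hconn (m - 1) 0 (fun _ => 0) rfl (fun t _ => h0)
      (by intro t ht; omega) hinit
  have hn2 : n ≤ 2 * m - 2 := by omega
  have hlZ : (0 : ℤ) < (l : ℤ) := by exact_mod_cast hl
  refine ⟨n / l, fun i => fun s => w ((i : ℕ) * l) s / (l : ℤ), ?_, ?_, ?_, ?_⟩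
  · funext s
    simp [hw0]
  · -- cardinality bound
    have hlR : (0 : ℝ) < (l : ℝ) := by exact_mod_cast hl
    have hml : (n / l) * l ≤ 2 * m - 2 := le_trans (Nat.div_mul_le_self n l) hn2
    have h1 : ((n / l : ℕ) : ℝ) * l ≤ 2 * (m : ℝ) - 2 := by
      have h' : (((n / l) * l : ℕ) : ℝ) ≤ ((2 * m - 2 : ℕ) : ℝ) := by exact_mod_cast hml
      rw [Nat.cast_sub (show 2 ≤ 2 * m by omega)] at h'
      push_cast at h'
      linarith
    have h2 : ((n / l : ℕ) : ℝ) ≤ (2 * (m : ℝ) - 2) / l := (le_div_iff₀ hlR).2 h1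
    linarith
  · -- covering
    intro zz hzz
    obtain ⟨t, htn, hwt⟩ := hwcov zz hzz
    have hid : t / l ≤ n / l := Nat.div_le_div_right htn
    refine ⟨⟨t / l, by omega⟩, fun s => ?_⟩
    have hil : t / l * l ≤ t := Nat.div_mul_le_self t l
    have hd1 : |w t s - w (t / l * l) s| ≤ (t : ℤ) - (t / l * l : ℕ) :=
      cggk_walk_dist w n hwstep _ t hil htn s
    have hmod : t - t / l * l < l := by
      have key := Nat.div_add_mod' t l
      have h2 := Nat.mod_lt t (show 0 < l by omega)
      omega
    have hd1' : |w t s - w (t / l * l) s| ≤ (l : ℤ) - 1 := by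
      refine le_trans hd1 ?_
      have : (t : ℤ) - (t / l * l : ℕ) = ((t - t / l * l : ℕ) : ℤ) := by
        push_cast [Nat.cast_sub hil]; ring
      rw [this]
      exact_mod_cast by omega
    set a := w (t / l * l) s with ha
    have hd2 : |a - (l : ℤ) * (a / l)| ≤ (l : ℤ) - 1 := by
      have he := Int.mul_ediv_add_emod a (l : ℤ)
      have h1 := Int.emod_nonneg a hlZ.ne'
      have h2 := Int.emod_lt_of_pos a hlZ
      rw [abs_le]
      constructor <;> omega
    rw [← hwt]
    calc |w t s - (l : ℤ) * (a / l)|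
        ≤ |w t s - a| + |a - (l : ℤ) * (a / l)| := abs_sub_le _ _ _
      _ ≤ ((l : ℤ) - 1) + ((l : ℤ) - 1) := add_le_add hd1' hd2
      _ ≤ 2 * l := by omega
  · -- consecutive boxes
    intro i j hij s
    have hi : (i : ℕ) * l ≤ (j : ℕ) * l := by
      have : (i : ℕ) ≤ (j : ℕ) := by omega
      exact Nat.mul_le_mul_right l this
    have hjn : (j : ℕ) * l ≤ n := by
      have hj : (j : ℕ) ≤ n / l := by omega
      calc (j : ℕ) * l ≤ (n / l) * l := Nat.mul_le_mul_right l hj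
        _ ≤ n := Nat.div_mul_le_self n l
    have hd : |w ((j : ℕ) * l) s - w ((i : ℕ) * l) s| ≤ (l : ℤ) := by
      have := cggk_walk_dist w n hwstep ((i : ℕ) * l) ((j : ℕ) * l) hi hjn s
      refine le_trans this ?_
      have : ((j : ℕ) * l : ℤ) - ((i : ℕ) * l : ℤ) = (l : ℤ) := by
        have hj : (j : ℕ) = (i : ℕ) + 1 := by omega
        push_cast [hj]; ring
      push_cast at this ⊢
      omega
    rw [abs_sub_comm] at hd
    exact cggk_ediv_pair_abs _ _ _ hlZ hd
end
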